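/- Let G=(V,E) be a DAG, let u,v be distinct vertices and W ⊆ V∖{u,v}, and let π be a path between u and v that d-connects u and v given W (every collider on π is an ancestor of some element of W and every non-collider on π is not in W). If x is a non-collider on π (so x ∉ W and x ∉ {u,v}), then x ∈ an(G, W∪{u,v}), i.e., x is an ancestor in G of u, of v, or of some element of W. -/

import Mathlib

/-! Basic graphical-model definitions: DAGs as binary relations on a finite
vertex type, d-separation via paths (lists of vertices), Markov equivalence,
and definite (non-)ancestral relations. -/

variable {V : Type*}

/-- Two nodes are adjacent in the digraph `E` if there is an edge between them
in either direction. -/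
def Adjacent (E : V → V → Prop) (a b : V) : Prop := E a b ∨ E b a

/-- A digraph is acyclic if it has no directed cycles. -/
def Acyclic (E : V → V → Prop) : Prop := ∀ v : V, ¬ Relation.TransGen E v v

/-- `u` is an ancestor of `v`: there is a directed path from `u` to `v`
(by convention, `v` is an ancestor of itself). -/
def Anc (E : V → V → Prop) (u v : V) : Prop := Relation.ReflTransGen E u v

/-- A list of vertices is a path in the skeleton of `E`: consecutive vertices
are adjacent and no vertex repeats. -/
def IsPath (E : V → V → Prop) (p : List V) : Prop :=
  p.Nodup ∧ List.Chain' (Adjacent E) p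

/-- A path `p` is d-connecting given the conditioning set `C` if every collider
on it is an ancestor of an element of `C` and every non-collider on it is
outside `C`.  Interior vertices of `p` are exactly the middle elements `x` of
consecutive triples `[a, x, b]` of `p`; such an `x` is a collider when both
incident edges point into it. -/
def IsDConnectingPath (E : V → V → Prop) (C : Set V) (p : List V) : Prop :=
  ∀ a x b : V, [a, x, b] <:+: p →
    ((E a x ∧ E b x) → ∃ c ∈ C, Anc E x c) ∧ (¬ (E a x ∧ E b x) → x ∉ C)

/-- `u` and `v` are d-connected given `C` in `E`. -/
def DConn (E : V → V → Prop) (C : Set V) (u v : V) : Prop :=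
  ∃ p : List V, IsPath E p ∧ p.head? = some u ∧ p.getLast? = some v ∧
    IsDConnectingPath E C p

/-- `u` and `v` are d-separated given `C` in `E`. -/
def DSep (E : V → V → Prop) (C : Set V) (u v : V) : Prop := ¬ DConn E C u v

/-- Two DAGs on the same vertex set are Markov equivalent if they have exactly
the same d-separation relations. -/
def MarkovEquiv (E E' : V → V → Prop) : Prop :=
  ∀ (u v : V) (C : Set V), u ≠ v → u ∉ C → v ∉ C → (DSep E C u v ↔ DSep E' C u v)

/-- `u` is definite ancestral to `v` (`u ⇝ v`): `u` is an ancestor of `v` in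
every DAG Markov equivalent to `E`. -/
def DefAnc (E : V → V → Prop) (u v : V) : Prop :=
  ∀ E' : V → V → Prop, Acyclic E' → MarkovEquiv E E' → Anc E' u v

/-- `u` is definite non-ancestral to `v` (`u ̸⇝ v`): `u` is not an ancestor of
`v` in any DAG Markov equivalent to `E`. -/
def DefNonAnc (E : V → V → Prop) (u v : V) : Prop :=
  ∀ E' : V → V → Prop, Acyclic E' → MarkovEquiv E E' → ¬ Anc E' u v

/-- The CPDAG of `E` has a directed edge `a → b` iff `a` and `b` are adjacent
and the edge is oriented `a → b` in every member of the Markov equivalence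
class of `E`. -/
def CPDAGDir (E : V → V → Prop) (a b : V) : Prop :=
  Adjacent E a b ∧ ∀ E' : V → V → Prop, Acyclic E' → MarkovEquiv E E' → E' a b

/-- A possibly directed path in the CPDAG of `E`: a path in the skeleton such
that no edge on it is directed backwards (as `x_{i+1} → x_i`) in the CPDAG. -/
def IsPossiblyDirectedPath (E : V → V → Prop) (p : List V) : Prop :=
  p.Nodup ∧ List.Chain' (fun a b => Adjacent E a b ∧ ¬ CPDAGDir E b a) p

/-- A path is unshielded if no three consecutive vertices on it are pairwise
adjacent. -/
def UnshieldedPath (E : V → V → Prop) (p : List V) : Prop :=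
  ∀ a x b : V, [a, x, b] <:+: p → ¬ Adjacent E a b


/-- Auxiliary: walking forward along a d-connecting path from an edge out of `x`,
we either reach the end `v` via a directed path or hit a collider, which is an
ancestor of `W`. -/
lemma stmt13_aux {E : V → V → Prop} {W : Set V} {p : List V}
    (hdc : IsDConnectingPath E W p) (hchp : List.Chain' (Adjacent E) p)
    {v : V} (hlast : p.getLast? = some v) :
    ∀ (rest : List V) (x b : V), (x :: b :: rest) <:+ p → E x b →
      Anc E x v ∨ ∃ w ∈ W, Anc E x w := by
  intro rest
  induction rest with
  | nil =>
    intro x b hsuf hxb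
    obtain ⟨s, rfl⟩ := hsuf
    have hb : (s ++ [x, b]).getLast? = some b := by
      rw [show s ++ [x, b] = (s ++ [x]) ++ [b] by simp]
      simp [List.getLast?_append]
    rw [hlast] at hb
    obtain rfl : v = b := by injection hb
    exact Or.inl (Relation.ReflTransGen.single hxb)
  | cons c rest ih =>
    intro x b hsuf hxb
    have hinf : [x, b, c] <:+: p :=
      ((List.prefix_iff_eq_take.mpr rfl : [x, b, c] <+: x :: b :: c :: rest).isInfix).trans
        hsuf.isInfix
    by_cases hcb : E c b
    · obtain ⟨w, hw, hbw⟩ := (hdc x b c hinf).1 ⟨hxb, hcb⟩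
      exact Or.inr ⟨w, hw, Relation.ReflTransGen.head hxb hbw⟩
    · have hch : List.Chain' (Adjacent E) (x :: b :: c :: rest) := hchp.suffix hsuf
      have hadj : Adjacent E b c := (List.isChain_cons_cons.mp (List.isChain_cons_cons.mp hch).2).1
      have hbc : E b c := hadj.resolve_right hcb
      have hsuf' : (b :: c :: rest) <:+ p := (List.suffix_cons x _).trans hsuf
      rcases ih b c hsuf' hbc with h | ⟨w, hw, hbw⟩
      · exact Or.inl (Relation.ReflTransGen.head hxb h)
      · exact Or.inr ⟨w, hw, Relation.ReflTransGen.head hxb hbw⟩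

/-- step of the proof of Lemma 2: any non-collider `x` on a
path that d-connects `u` and `v` given `W` is an ancestor of `u`, of `v`, or of
some element of `W`. -/
theorem stmt13 [Fintype V] (E : V → V → Prop) (hE : Acyclic E) (u v : V) (huv : u ≠ v)
    (W : Set V) (hWu : u ∉ W) (hWv : v ∉ W)
    (p : List V) (hp : IsPath E p)
    (hhead : p.head? = some u) (hlast : p.getLast? = some v)
    (hdc : IsDConnectingPath E W p)
    (x a b : V) (hmid : [a, x, b] <:+: p) (hnc : ¬ (E a x ∧ E b x)) :
    Anc E x u ∨ Anc E x v ∨ ∃ w ∈ W, Anc E x w := by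
  obtain ⟨s, t, hst⟩ := hmid
  have hchax : Adjacent E a x := by
    have := hp.2.infix (⟨s, t, hst⟩ : [a, x, b] <:+: p)
    exact (List.isChain_cons_cons.mp this).1
  have hchxb : Adjacent E x b := by
    have := hp.2.infix (⟨s, t, hst⟩ : [a, x, b] <:+: p)
    exact (List.isChain_cons_cons.mp (List.isChain_cons_cons.mp this).2).1
  by_cases hbx : E b x
  · -- the edge x → a points backwards; walk along the reversed path toward u
    have hax : ¬ E a x := fun h => hnc ⟨h, hbx⟩
    have hxa : E x a := hchax.resolve_left hax
    have hdc' : IsDConnectingPath E W p.reverse := by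
      intro a' x' b' hinf
      have hinf' : [b', x', a'] <:+: p := by
        rw [← List.reverse_infix]
        simpa using hinf
      have := hdc b' x' a' hinf'
      constructor
      · intro ⟨h1, h2⟩; exact this.1 ⟨h2, h1⟩
      · intro h; exact this.2 fun ⟨h1, h2⟩ => h ⟨h2, h1⟩
    have hch' : List.Chain' (Adjacent E) p.reverse := by
      show List.IsChain _ _
      rw [List.isChain_reverse]
      exact hp.2.imp fun a b h => Or.symm h
    have hlast' : p.reverse.getLast? = some u := by
      rwa [List.getLast?_reverse]
    have hsuf : (x :: a :: s.reverse) <:+ p.reverse := by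
      refine ⟨t.reverse ++ [b], ?_⟩
      rw [← hst]
      simp
    rcases stmt13_aux hdc' hch' hlast' s.reverse x a hsuf hxa with h | h
    · exact Or.inl h
    · exact Or.inr (Or.inr h)
  · -- the edge x → b points forward; walk along the path toward v
    have hxb : E x b := hchxb.resolve_right hbx
    have hsuf : (x :: b :: t) <:+ p := by
      refine ⟨s ++ [a], ?_⟩
      rw [← hst]
      simp
    rcases stmt13_aux hdc hp.2 hlast t x b hsuf hxb with h | h
    · exact Or.inr (Or.inl h)
    · exact Or.inr (Or.inr h)
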